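/- Let (K, v) be a separably closed valued field of characteristic p > 0 with valuation ring O and value group Γ = v(K^×). Let a_0, …, a_e ∈ O with a_0 ≠ 0 and min_i v(a_i) = 0, let b_1, b_2 ∈ K, and let μ_1, μ_2 ∈ Γ. Then there exists u ∈ K with v(u^p − b_1) ≥ μ_1 and v(∑_{i=0}^{e} a_i·u^{p^i} − b_2) ≥ μ_2 if and only if v(∑_{i=0}^{e} a_i^p·b_1^{p^i} − b_2^p) ≥ min( min_{i : a_i ≠ 0} (p^i·μ_1 + p·v(a_i)), p·μ_2 ). -/

import Mathlib

/-- A valuation on a field `K` with values in the linearly ordered abelian group `Γ`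
(together with `∞ = ⊤`), surjective onto `Γ`, i.e. `Γ = v(K^×)`. -/
structure ValuedFieldAux (K : Type*) [Field K] (Γ : Type*)
    [AddCommGroup Γ] [LinearOrder Γ] [IsOrderedAddMonoid Γ] where
  v : K → WithTop Γ
  v_eq_top_iff : ∀ x : K, v x = ⊤ ↔ x = 0
  v_mul : ∀ x y : K, v (x * y) = v x + v y
  v_add : ∀ x y : K, min (v x) (v y) ≤ v (x + y)
  v_surj : ∀ γ : Γ, ∃ x : K, v x = (γ : WithTop Γ)

namespace ValuedFieldAux

variable {K : Type*} [Field K] {Γ : Type*} [AddCommGroup Γ] [LinearOrder Γ] [IsOrderedAddMonoid Γ]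
  (vf : ValuedFieldAux K Γ)

lemma v0 : vf.v 0 = ⊤ := (vf.v_eq_top_iff 0).2 rfl

lemma vnt {x : K} (h : x ≠ 0) : vf.v x ≠ ⊤ := fun ht => h ((vf.v_eq_top_iff x).1 ht)

lemma v1 : vf.v 1 = 0 := by
  have h := vf.v_mul 1 1
  rw [one_mul] at h
  obtain ⟨g, hg⟩ := WithTop.ne_top_iff_exists.1 (vf.vnt (one_ne_zero : (1:K) ≠ 0))
  rw [← hg] at h ⊢
  rw [← WithTop.coe_add, WithTop.coe_eq_coe] at h
  have hg0 : g = 0 := left_eq_add.mp h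
  simp [hg0]

lemma vneg (x : K) : vf.v (-x) = vf.v x := by
  have h : vf.v (-1 : K) = 0 := by
    have h := vf.v_mul (-1) (-1)
    rw [neg_one_mul, neg_neg, vf.v1] at h
    obtain ⟨g, hg⟩ := WithTop.ne_top_iff_exists.1 (vf.vnt (neg_ne_zero.2 (one_ne_zero : (1:K) ≠ 0)))
    rw [← hg, ← WithTop.coe_add, show (0 : WithTop Γ) = ((0:Γ) : WithTop Γ) from rfl,
      WithTop.coe_eq_coe] at h
    rw [← hg, show (0 : WithTop Γ) = ((0:Γ) : WithTop Γ) from rfl, WithTop.coe_eq_coe]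
    rcases lt_trichotomy g 0 with hlt|heq|hgt
    · exact absurd h.symm (ne_of_lt (Left.add_neg hlt hlt))
    · exact heq
    · exact absurd h.symm (ne_of_gt (Left.add_pos hgt hgt))
  calc vf.v (-x) = vf.v ((-1) * x) := by rw [neg_one_mul]
  _ = vf.v x := by rw [vf.v_mul, h, zero_add]

lemma vpow (x : K) (n : ℕ) : vf.v (x ^ n) = n • vf.v x := by
  induction n with
  | zero => simp [vf.v1]
  | succ n ih => rw [pow_succ, vf.v_mul, ih, succ_nsmul]

lemma vsub (x y : K) : min (vf.v x) (vf.v y) ≤ vf.v (x - y) := by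
  rw [sub_eq_add_neg]
  have := vf.v_add x (-y)
  rwa [vf.vneg] at this

lemma vadd_eq {x y : K} (h : vf.v x < vf.v y) : vf.v (x + y) = vf.v x := by
  refine le_antisymm ?_ (le_trans (le_of_eq (min_eq_left h.le).symm) (vf.v_add x y))
  by_contra hc
  push_neg at hc
  have h3 : vf.v x = vf.v ((x + y) + -y) := by rw [add_neg_cancel_right]
  have h4 := vf.v_add (x + y) (-y)
  rw [vf.vneg] at h4
  have h5 := lt_of_lt_of_le (lt_min hc h) h4
  rw [← h3] at h5
  exact lt_irrefl _ h5

lemma vsum {ι : Type*} {s : Finset ι} {f : ι → K} {B : WithTop Γ}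
    (h : ∀ i ∈ s, B ≤ vf.v (f i)) : B ≤ vf.v (∑ i ∈ s, f i) := by
  classical
  induction s using Finset.cons_induction with
  | empty => simp [vf.v0]
  | cons i s hi ih =>
    rw [Finset.sum_cons]
    exact le_trans (le_min (h i (Finset.mem_cons_self i s))
      (ih fun j hj => h j (Finset.mem_cons_of_mem hj))) (vf.v_add _ _)

lemma vmsum_lt {s : Multiset K} {b : Γ} (h : ∀ x ∈ s, (b : WithTop Γ) < vf.v x) :
    (b : WithTop Γ) < vf.v s.sum := by
  induction s using Multiset.induction with
  | empty => simp [vf.v0, WithTop.coe_lt_top]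
  | cons x s ih =>
    rw [Multiset.sum_cons]
    have h1 := h x (by simp)
    have h2 := ih fun y hy => h y (by simp [hy])
    exact lt_of_lt_of_le (lt_min h1 h2) (vf.v_add _ _)

lemma vmprod (s : Multiset K) : vf.v s.prod = (s.map vf.v).sum := by
  induction s using Multiset.induction with
  | empty => simp [vf.v1]
  | cons x s ih => rw [Multiset.prod_cons, vf.v_mul, ih, Multiset.map_cons, Multiset.sum_cons]

end ValuedFieldAux

namespace ValuedFieldAux

open Polynomial

variable {K : Type*} [Field K] {Γ : Type*} [AddCommGroup Γ] [LinearOrder Γ] [IsOrderedAddMonoid Γ]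
  (vf : ValuedFieldAux K Γ)

lemma exists_pow_approx (p : ℕ) (hp : p.Prime) [CharP K p] [IsSepClosed K]
    (c : K) (N : Γ) (hN : 0 ≤ N) : ∃ z : K, (N : WithTop Γ) ≤ vf.v (z ^ p - c) := by
  by_cases hc : c = 0
  · exact ⟨0, by rw [hc, zero_pow hp.ne_zero, sub_zero, vf.v0]; exact le_top⟩
  obtain ⟨γ, hγ⟩ := WithTop.ne_top_iff_exists.1 (vf.vnt hc)
  set D : Γ := max N (N - γ) with hD
  obtain ⟨d, hd⟩ := vf.v_surj D
  have hd0 : d ≠ 0 := fun h0 => by rw [h0, vf.v0] at hd; exact (WithTop.top_ne_coe) hd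
  set G : K[X] := X ^ p + (C d * X - C c) with hG
  have hderiv : derivative G = C d := by
    rw [hG]
    simp [derivative_X_pow, CharP.cast_eq_zero K p]
  have hsep : G.Separable := by
    refine ⟨0, C d⁻¹, ?_⟩
    rw [hderiv, ← C_mul, inv_mul_cancel₀ hd0, C_1, zero_mul, zero_add]
  have hdeg : G.degree = p := by
    rw [hG]
    rw [degree_add_eq_left_of_degree_lt, degree_X_pow]
    rw [degree_X_pow]
    refine lt_of_le_of_lt (degree_sub_le _ _) ?_
    have h1 : (C d * X).degree = 1 := degree_C_mul_X hd0
    have h2 : (C c).degree ≤ 1 := le_trans degree_C_le (by norm_num)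
    refine lt_of_le_of_lt (max_le h1.le h2) ?_
    exact_mod_cast Nat.lt_of_lt_of_le hp.one_lt le_rfl
  obtain ⟨z, hz⟩ := IsSepClosed.exists_root G (by rw [hdeg]; exact_mod_cast hp.ne_zero) hsep
  have hz' : z ^ p + (d * z - c) = 0 := by
    have := hz
    simp only [hG, IsRoot.def, eval_add, eval_sub, eval_pow, eval_X, eval_mul, eval_C] at this
    linear_combination this
  have hkey : z ^ p - c = -(d * z) := by linear_combination hz'
  have hvdz : vf.v (d * z) = ↑D + vf.v z := by rw [vf.v_mul, hd]
  refine ⟨z, ?_⟩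
  rw [hkey, vf.vneg, hvdz]
  rcases le_or_gt 0 (vf.v z) with hz0 | hz0
  · calc (N : WithTop Γ) ≤ (D : WithTop Γ) := WithTop.coe_le_coe.2 (le_max_left _ _)
    _ = ↑D + 0 := (add_zero _).symm
    _ ≤ ↑D + vf.v z := add_le_add_right hz0 _
  · -- v z < 0, so z ≠ 0 and v z = ζ with ζ < 0
    have hznt : vf.v z ≠ ⊤ := ne_top_of_lt hz0
    obtain ⟨ζ, hζ⟩ := WithTop.ne_top_iff_exists.1 hznt
    have hζ0 : ζ < 0 := by
      rw [← hζ] at hz0; exact_mod_cast hz0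
    have hp2 := hp.two_le
    have hp1 : (p - 1) ≠ 0 := by omega
    have hsmul : p • ζ = (p-1) • ζ + ζ := by
      have : p = (p-1) + 1 := by omega
      nth_rewrite 1 [this]
      rw [add_nsmul, one_nsmul]
    have hneg : (p-1) • ζ < 0 := nsmul_neg hζ0 hp1
    -- v (z^p) < v (d z)
    have hlt : vf.v (z ^ p) < vf.v (d * z) := by
      rw [vf.vpow, ← hζ, hvdz, ← hζ, ← WithTop.coe_nsmul, ← WithTop.coe_add, WithTop.coe_lt_coe]
      calc p • ζ = (p-1) • ζ + ζ := hsmul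
      _ < 0 + ζ := add_lt_add_left hneg ζ
      _ = ζ := zero_add ζ
      _ ≤ D + ζ := le_add_of_nonneg_left (le_trans hN (le_max_left _ _))
    have hcz : c = z ^ p + d * z := by linear_combination -hz'
    have hvc : vf.v c = vf.v (z ^ p) := by rw [hcz, vf.vadd_eq hlt]
    have hγζ : γ = p • ζ := by
      have : (γ : WithTop Γ) = ↑(p • ζ) := by
        rw [hγ, hvc, vf.vpow, ← hζ, ← WithTop.coe_nsmul]
      exact_mod_cast this
    rw [← hζ, ← WithTop.coe_add, WithTop.coe_le_coe]
    have h1 : N - γ ≤ D := le_max_right _ _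
    have h2 : N ≤ D + p • ζ := by
      rw [hγζ] at h1
      exact sub_le_iff_le_add.1 h1
    calc N ≤ D + p • ζ := h2
    _ = D + ζ + (p-1) • ζ := by rw [hsmul]; abel
    _ ≤ D + ζ + 0 := add_le_add_right hneg.le _
    _ = D + ζ := add_zero _

end ValuedFieldAux

namespace ValuedFieldAux

open Polynomial

variable {K : Type*} [Field K] {Γ : Type*} [AddCommGroup Γ] [LinearOrder Γ] [IsOrderedAddMonoid Γ]
  (vf : ValuedFieldAux K Γ)

lemma vneg_one : vf.v (-1 : K) = 0 := by
  rw [show (-1 : K) = -(1:K) from rfl, vf.vneg, vf.v1]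

lemma msum_coe {S : Multiset K} (h : ∀ x ∈ S, x ≠ 0) :
    ∃ τ : Γ, (S.map vf.v).sum = (τ : WithTop Γ) := by
  induction S using Multiset.induction with
  | empty => exact ⟨0, by simp⟩
  | cons x S ih =>
    obtain ⟨g, hg⟩ := WithTop.ne_top_iff_exists.1 (vf.vnt (h x (Multiset.mem_cons_self x S)))
    obtain ⟨τ, hτ⟩ := ih fun y hy => h y (Multiset.mem_cons_of_mem hy)
    exact ⟨g + τ, by rw [Multiset.map_cons, Multiset.sum_cons, hτ, ← hg, ← WithTop.coe_add]⟩

lemma wt_add_lt {a c : WithTop Γ} {b d : Γ} (h1 : a < (b : WithTop Γ))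
    (h2 : c < (d : WithTop Γ)) : a + c < ((b + d : Γ) : WithTop Γ) := by
  obtain ⟨a', ha'⟩ := WithTop.ne_top_iff_exists.1 (ne_top_of_lt h1)
  obtain ⟨c', hc'⟩ := WithTop.ne_top_iff_exists.1 (ne_top_of_lt h2)
  rw [← ha'] at h1 ⊢
  rw [← hc'] at h2 ⊢
  rw [← WithTop.coe_add, WithTop.coe_lt_coe]
  exact add_lt_add (WithTop.coe_lt_coe.1 h1) (WithTop.coe_lt_coe.1 h2)

lemma vmsum_card_lt {W : Multiset K} {μ : Γ} (hW : W ≠ 0)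
    (h : ∀ x ∈ W, vf.v x < (μ : WithTop Γ)) :
    (W.map vf.v).sum < ((W.card • μ : Γ) : WithTop Γ) := by
  induction W using Multiset.induction with
  | empty => exact absurd rfl hW
  | cons x W ih =>
    rw [Multiset.map_cons, Multiset.sum_cons, Multiset.card_cons]
    by_cases hW0 : W = 0
    · subst hW0
      simpa using h x (Multiset.mem_cons_self x 0)
    · have h1 := h x (Multiset.mem_cons_self x W)
      have h2 := ih hW0 fun y hy => h y (Multiset.mem_cons_of_mem hy)
      have h3 := wt_add_lt h1 h2
      have heq : (Multiset.card W + 1) • μ = μ + Multiset.card W • μ := by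
        rw [succ_nsmul, add_comm]
      rw [heq]
      exact h3

lemma exists_root_additive (p : ℕ) (hp : p.Prime) [CharP K p] [IsSepClosed K]
    (e : ℕ) (a : ℕ → K) (ha0 : a 0 ≠ 0) (μ₁ : Γ) (c : K) (hc : c ≠ 0)
    (i₀ : ℕ) (hi₀ : i₀ ≤ e) (hai₀ : a i₀ ≠ 0)
    (hbound : ((p ^ i₀ • μ₁ : Γ) : WithTop Γ) + p • vf.v (a i₀) ≤ vf.v c) :
    ∃ η : K, (∑ i ∈ Finset.range (e+1), (a i)^p * η ^ (p ^ i)) = c ∧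
      (μ₁ : WithTop Γ) ≤ vf.v η := by
  classical
  set e' := Nat.findGreatest (fun i => a i ≠ 0) e with he'
  have he'le : e' ≤ e := Nat.findGreatest_le e
  have he'ne : a e' ≠ 0 := Nat.findGreatest_spec (P := fun i => a i ≠ 0) (Nat.zero_le e) ha0
  have hgt : ∀ i, e' < i → i ≤ e → a i = 0 := fun i h1 h2 => by
    by_contra hne
    exact Nat.findGreatest_is_greatest h1 h2 hne
  have hii : i₀ ≤ e' := Nat.le_findGreatest hi₀ hai₀
  set d := p ^ e' with hd
  set F : K[X] := (∑ i ∈ Finset.range (e+1), C ((a i)^p) * X ^ (p ^ i)) - C c with hF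
  -- coefficients
  have hcoeff : ∀ j ≤ e, F.coeff (p ^ j) = (a j)^p := by
    intro j hj
    rw [hF, coeff_sub, finset_sum_coeff, coeff_C,
      if_neg (pow_ne_zero j hp.ne_zero), sub_zero]
    rw [Finset.sum_eq_single j]
    · rw [coeff_C_mul, coeff_X_pow, if_pos rfl, mul_one]
    · intro i _ hij
      rw [coeff_C_mul, coeff_X_pow,
        if_neg (fun hh => hij (Nat.pow_right_injective hp.two_le hh.symm)), mul_zero]
    · intro hj'
      exact absurd (Finset.mem_range.2 (Nat.lt_succ_of_le hj)) hj'
  have hcoeff0 : F.coeff 0 = -c := by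
    rw [hF, coeff_sub, finset_sum_coeff, coeff_C, if_pos rfl]
    rw [Finset.sum_eq_zero, zero_sub]
    intro i _
    rw [coeff_C_mul, coeff_X_pow, if_neg (pow_pos hp.pos i).ne, mul_zero]
  -- degree bound
  have hdegle : F.degree ≤ (d : WithBot ℕ) := by
    rw [hF]
    refine le_trans (degree_sub_le _ _) (max_le ?_ (le_trans degree_C_le ?_))
    · refine le_trans (degree_sum_le _ _) ?_
      rw [Finset.sup_le_iff]
      intro i hi
      rcases le_or_gt i e' with h1 | h1
      · exact le_trans (degree_C_mul_X_pow_le _ _)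
          (by exact_mod_cast Nat.pow_le_pow_right hp.pos h1)
      · rw [hgt i h1 (Nat.lt_succ_iff.1 (Finset.mem_range.1 hi)), zero_pow hp.ne_zero, C_0,
          zero_mul]
        exact bot_le
    · exact_mod_cast Nat.zero_le d
  have hcd : F.coeff d ≠ 0 := by
    rw [hd, hcoeff e' he'le]
    exact pow_ne_zero _ he'ne
  have hnd : F.natDegree = d :=
    le_antisymm (natDegree_le_iff_degree_le.2 hdegle) (le_natDegree_of_ne_zero hcd)
  have hF0 : F ≠ 0 := fun h => hcd (by rw [h, coeff_zero])
  have hlead : F.leadingCoeff = (a e')^p := by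
    rw [leadingCoeff, hnd, hd, hcoeff e' he'le]
  have hleadne : F.leadingCoeff ≠ 0 := by rw [hlead]; exact pow_ne_zero _ he'ne
  -- derivative and separability
  have hder : derivative F = C ((a 0)^p) := by
    rw [hF, derivative_sub, derivative_C, sub_zero, derivative_sum]
    rw [Finset.sum_eq_single 0]
    · rw [derivative_C_mul_X_pow]
      norm_num
    · intro i _ hi0
      rw [derivative_C_mul_X_pow]
      have hcast : ((p ^ i : ℕ) : K) = 0 := by
        rw [Nat.cast_pow, CharP.cast_eq_zero K p, zero_pow hi0]
      rw [hcast, mul_zero, C_0, zero_mul]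
    · intro h0
      exact absurd (Finset.mem_range.2 (Nat.succ_pos e)) h0
  have hsep : F.Separable := ⟨0, C ((a 0)^p)⁻¹, by
    rw [hder, ← C_mul, inv_mul_cancel₀ (pow_ne_zero _ ha0), C_1, zero_mul, zero_add]⟩
  have hsplit := IsSepClosed.splits_of_separable F hsep
  have hcard : Multiset.card F.roots = d := by
    rw [(splits_iff_card_roots).1 hsplit, hnd]
  have hprod := hsplit.eq_prod_roots
  have hroots0 : ∀ r ∈ F.roots, r ≠ 0 := by
    intro r hr hr0
    have hroot := isRoot_of_mem_roots hr
    rw [IsRoot.def, hr0, ← coeff_zero_eq_eval_zero, hcoeff0, neg_eq_zero] at hroot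
    exact hc hroot
  -- existence of a root of big valuation
  have hex : ∃ r ∈ F.roots, (μ₁ : WithTop Γ) ≤ vf.v r := by
    by_contra hall
    push_neg at hall
    obtain ⟨σ, hσ⟩ := vf.msum_coe (S := F.roots) hroots0
    obtain ⟨αe, hαe⟩ := WithTop.ne_top_iff_exists.1 (vf.vnt he'ne)
    obtain ⟨αi, hαi⟩ := WithTop.ne_top_iff_exists.1 (vf.vnt hai₀)
    have hvlead : vf.v F.leadingCoeff = ((p • αe : Γ) : WithTop Γ) := by
      rw [hlead, vf.vpow, ← hαe, ← WithTop.coe_nsmul]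
    have hceq : (-c) = F.leadingCoeff * (Multiset.map (fun r => -r) F.roots).prod := by
      rw [← hcoeff0]
      conv_lhs => rw [hprod]
      rw [coeff_C_mul, coeff_zero_eq_eval_zero, eval_multiset_prod, Multiset.map_map]
      refine congrArg (fun w => F.leadingCoeff * w)
        (congrArg Multiset.prod (Multiset.map_congr rfl fun r _ => ?_))
      simp
    have hvc : vf.v c = ((p • αe + σ : Γ) : WithTop Γ) := by
      rw [← vf.vneg c, hceq, vf.v_mul, hvlead]
      have hvmp : vf.v (Multiset.map (fun r => -r) F.roots).prod = (σ : WithTop Γ) := by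
        rw [vf.vmprod, Multiset.map_map, ← hσ]
        exact congrArg Multiset.sum (Multiset.map_congr rfl fun r _ => vf.vneg r)
      rw [hvmp, ← WithTop.coe_add]
    have hple : p ^ i₀ ≤ Multiset.card F.roots := by
      rw [hcard, hd]
      exact Nat.pow_le_pow_right hp.pos hii
    have hcoeffi : (a i₀)^p = F.leadingCoeff *
        ((-1)^(Multiset.card F.roots - p ^ i₀) *
          F.roots.esymm (Multiset.card F.roots - p ^ i₀)) := by
      rw [← hcoeff i₀ hi₀]
      conv_lhs => rw [hprod]
      rw [coeff_C_mul, Multiset.prod_X_sub_C_coeff F.roots hple]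
    have hvesymm : vf.v ((-1)^(Multiset.card F.roots - p ^ i₀) *
        F.roots.esymm (Multiset.card F.roots - p ^ i₀)) =
        vf.v (F.roots.esymm (Multiset.card F.roots - p ^ i₀)) := by
      rw [vf.v_mul, vf.vpow, vf.vneg_one, smul_zero, zero_add]
    have hvai : ((p • αi : Γ) : WithTop Γ) =
        ((p • αe : Γ) : WithTop Γ) + vf.v (F.roots.esymm (Multiset.card F.roots - p ^ i₀)) := by
      calc ((p • αi : Γ) : WithTop Γ) = vf.v ((a i₀)^p) := by
            rw [vf.vpow, ← hαi, WithTop.coe_nsmul]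
      _ = vf.v F.leadingCoeff + vf.v ((-1)^(Multiset.card F.roots - p ^ i₀) *
            F.roots.esymm (Multiset.card F.roots - p ^ i₀)) := by
            rw [hcoeffi, vf.v_mul]
      _ = _ := by rw [hvlead, hvesymm]
    have hbnd : ((σ - p ^ i₀ • μ₁ : Γ) : WithTop Γ) <
        vf.v (F.roots.esymm (Multiset.card F.roots - p ^ i₀)) := by
      have hesymm_def : F.roots.esymm (Multiset.card F.roots - p ^ i₀) =
          ((F.roots.powersetCard (Multiset.card F.roots - p ^ i₀)).map Multiset.prod).sum := rfl
      rw [hesymm_def]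
      apply vf.vmsum_lt
      intro x hx
      obtain ⟨t, ht, rfl⟩ := Multiset.mem_map.1 hx
      obtain ⟨hts, htc⟩ := Multiset.mem_powersetCard.1 ht
      have hcardst : Multiset.card (F.roots - t) = p ^ i₀ := by
        rw [Multiset.card_sub hts, htc]
        omega
      have hsub_ne : F.roots - t ≠ 0 := by
        intro h0
        rw [h0] at hcardst
        simp only [Multiset.card_zero] at hcardst
        exact absurd hcardst.symm (pow_ne_zero i₀ hp.ne_zero)
      obtain ⟨τ, hτ⟩ := vf.msum_coe (S := t)
        (fun y hy => hroots0 y (Multiset.mem_of_le hts hy))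
      obtain ⟨ρ, hρ⟩ := vf.msum_coe (S := F.roots - t)
        (fun y hy => hroots0 y (Multiset.mem_of_le tsub_le_self hy))
      have hrest : ((F.roots - t).map vf.v).sum < ((p ^ i₀ • μ₁ : Γ) : WithTop Γ) := by
        have h6 := vf.vmsum_card_lt hsub_ne
          (fun y hy => hall y (Multiset.mem_of_le tsub_le_self hy))
        rwa [hcardst] at h6
      have hρlt : ρ < p ^ i₀ • μ₁ := by
        rw [hρ] at hrest
        exact_mod_cast hrest
      have hστ : σ = ρ + τ := by
        have hsts : (F.roots - t) + t = F.roots := tsub_add_cancel_of_le hts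
        have h7 : (σ : WithTop Γ) = ((ρ + τ : Γ) : WithTop Γ) := by
          rw [← hσ, ← hsts, Multiset.map_add, Multiset.sum_add, hρ, hτ, WithTop.coe_add]
        exact_mod_cast h7
      rw [vf.vmprod, hτ, WithTop.coe_lt_coe, hστ]
      have h5 : ρ + τ < τ + p ^ i₀ • μ₁ := by
        rw [add_comm ρ τ]
        exact add_lt_add_right hρlt τ
      exact sub_lt_iff_lt_add.2 h5
    have hestop : vf.v (F.roots.esymm (Multiset.card F.roots - p ^ i₀)) ≠ ⊤ := by
      intro h
      rw [h, add_top] at hvai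
      exact WithTop.coe_ne_top hvai
    obtain ⟨π, hπ⟩ := WithTop.ne_top_iff_exists.1 hestop
    have hB : p • αi = p • αe + π := by
      rw [← hπ] at hvai
      exact_mod_cast hvai
    have hC : σ - p ^ i₀ • μ₁ < π := by
      rw [← hπ] at hbnd
      exact_mod_cast hbnd
    have hA : p ^ i₀ • μ₁ + p • αi ≤ p • αe + σ := by
      have h8 := hbound
      rw [hvc, ← hαi, ← WithTop.coe_nsmul, ← WithTop.coe_add] at h8
      exact_mod_cast h8
    have hcontra : p • αe + σ < p • αe + σ := by
      calc p • αe + σ < p • αe + (π + p ^ i₀ • μ₁) :=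
            add_lt_add_right (sub_lt_iff_lt_add.1 hC) _
      _ = p ^ i₀ • μ₁ + p • αi := by rw [hB]; abel
      _ ≤ p • αe + σ := hA
    exact lt_irrefl _ hcontra
  obtain ⟨r, hrs, hrv⟩ := hex
  refine ⟨r, ?_, hrv⟩
  have hroot := isRoot_of_mem_roots hrs
  rw [IsRoot.def, hF] at hroot
  simp only [eval_sub, eval_C, eval_finset_sum, eval_mul, eval_pow, eval_X] at hroot
  exact sub_eq_zero.1 hroot

end ValuedFieldAux

open Finset in
/-- Let `(K, v)` be a separably closed valued field of characteristic
`p > 0`. Let `a_0, …, a_e ∈ O` with `a_0 ≠ 0` and `min_i v(a_i) = 0`, `b₁, b₂ ∈ K`,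
`μ₁, μ₂ ∈ Γ`. Then the system `v(u^p − b₁) ≥ μ₁`, `v(∑ a_i·u^{p^i} − b₂) ≥ μ₂` has a
solution `u ∈ K` iff
`v(∑ a_i^p·b₁^{p^i} − b₂^p) ≥ min(min_{i : a_i ≠ 0}(p^i·μ₁ + p·v(a_i)), p·μ₂)`.
(Terms with `a_i = 0` give `v (a i) = ⊤` and do not contribute to the `inf`.) -/
theorem stmt_13 (p : ℕ) (hp : p.Prime) (K : Type*) [Field K] [CharP K p] [IsSepClosed K]
    (Γ : Type*) [AddCommGroup Γ] [LinearOrder Γ] [IsOrderedAddMonoid Γ] (vf : ValuedFieldAux K Γ)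
    (e : ℕ) (a : ℕ → K) (ha : ∀ i ≤ e, 0 ≤ vf.v (a i)) (ha0 : a 0 ≠ 0)
    (hamin : (Finset.range (e + 1)).inf (fun i => vf.v (a i)) = 0)
    (b₁ b₂ : K) (μ₁ μ₂ : Γ) :
    (∃ u : K, (μ₁ : WithTop Γ) ≤ vf.v (u ^ p - b₁) ∧
        (μ₂ : WithTop Γ) ≤ vf.v ((∑ i ∈ Finset.range (e + 1), a i * u ^ (p ^ i)) - b₂)) ↔
      min
        ((Finset.range (e + 1)).inf
          (fun i => p ^ i • (μ₁ : WithTop Γ) + p • vf.v (a i)))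
        (p • (μ₂ : WithTop Γ)) ≤
      vf.v ((∑ i ∈ Finset.range (e + 1), (a i) ^ p * b₁ ^ (p ^ i)) - b₂ ^ p) := by
  haveI : Fact p.Prime := ⟨hp⟩
  -- Frobenius on the additive polynomial
  have frob : ∀ u : K, (∑ i ∈ range (e + 1), a i * u ^ (p ^ i)) ^ p
      = ∑ i ∈ range (e + 1), (a i) ^ p * (u ^ p) ^ (p ^ i) := by
    intro u
    rw [sum_pow_char]
    refine Finset.sum_congr rfl fun i _ => ?_
    rw [mul_pow, ← pow_mul, ← pow_mul, mul_comm (p ^ i) p]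
  have Ladd : ∀ x y : K, (∑ i ∈ range (e + 1), (a i) ^ p * (x + y) ^ (p ^ i))
      = (∑ i ∈ range (e + 1), (a i) ^ p * x ^ (p ^ i))
        + (∑ i ∈ range (e + 1), (a i) ^ p * y ^ (p ^ i)) := by
    intro x y
    rw [← Finset.sum_add_distrib]
    refine Finset.sum_congr rfl fun i _ => ?_
    rw [add_pow_char_pow, mul_add]
  constructor
  · -- forward direction
    rintro ⟨u, h1, h2⟩
    have key : (∑ i ∈ range (e + 1), (a i) ^ p * b₁ ^ (p ^ i)) - b₂ ^ p
        = ((∑ i ∈ range (e + 1), a i * u ^ (p ^ i)) - b₂) ^ p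
          - ∑ i ∈ range (e + 1), (a i) ^ p * (u ^ p - b₁) ^ (p ^ i) := by
      rw [sub_pow_char, frob u]
      have h3 : ∀ i ∈ range (e + 1), (a i) ^ p * (u ^ p - b₁) ^ (p ^ i)
          = (a i) ^ p * (u ^ p) ^ (p ^ i) - (a i) ^ p * b₁ ^ (p ^ i) := fun i _ => by
        rw [sub_pow_char_pow, mul_sub]
      rw [Finset.sum_congr rfl h3, Finset.sum_sub_distrib]
      ring
    rw [key]
    refine le_trans (le_min ?_ ?_) (vf.vsub _ _)
    · refine le_trans (min_le_right _ _) ?_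
      rw [vf.vpow]
      exact nsmul_le_nsmul_right h2 p
    · refine le_trans (min_le_left _ _) (vf.vsum fun i hi => ?_)
      refine le_trans (Finset.inf_le hi) ?_
      rw [vf.v_mul, vf.vpow, vf.vpow, add_comm]
      exact add_le_add_right (nsmul_le_nsmul_right h1 (p ^ i)) _
  · -- backward direction
    intro h
    -- Step A : find `w` approximating both congruences
    have hstepA : ∃ w : K, (μ₁ : WithTop Γ) ≤ vf.v (w - b₁) ∧
        ((p • μ₂ : Γ) : WithTop Γ) ≤
          vf.v ((∑ i ∈ range (e + 1), (a i) ^ p * w ^ (p ^ i)) - b₂ ^ p) := by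
      by_cases hcase : ((p • μ₂ : Γ) : WithTop Γ) ≤
          vf.v ((∑ i ∈ range (e + 1), (a i) ^ p * b₁ ^ (p ^ i)) - b₂ ^ p)
      · exact ⟨b₁, by rw [sub_self, vf.v0]; exact le_top, hcase⟩
      · have hinf : (range (e + 1)).inf (fun i => p ^ i • (μ₁ : WithTop Γ) + p • vf.v (a i))
            ≤ vf.v ((∑ i ∈ range (e + 1), (a i) ^ p * b₁ ^ (p ^ i)) - b₂ ^ p) := by
          rcases min_le_iff.1 h with h' | h'
          · exact h'
          · rw [← WithTop.coe_nsmul] at h'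
            exact absurd h' hcase
        have hvlt : vf.v ((∑ i ∈ range (e + 1), (a i) ^ p * b₁ ^ (p ^ i)) - b₂ ^ p)
            < ((p • μ₂ : Γ) : WithTop Γ) := not_le.1 hcase
        set c : K := b₂ ^ p - ∑ i ∈ range (e + 1), (a i) ^ p * b₁ ^ (p ^ i) with hcdef
        have hvceq : vf.v c =
            vf.v ((∑ i ∈ range (e + 1), (a i) ^ p * b₁ ^ (p ^ i)) - b₂ ^ p) := by
          rw [hcdef, ← vf.vneg ((∑ i ∈ range (e + 1), (a i) ^ p * b₁ ^ (p ^ i)) - b₂ ^ p),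
            neg_sub]
        have hc : c ≠ 0 := by
          intro h0
          rw [h0, vf.v0] at hvceq
          rw [← hvceq] at hvlt
          exact absurd hvlt (not_lt.2 le_top)
        obtain ⟨i₀, hi₀mem, hinf_eq⟩ := Finset.exists_mem_eq_inf (range (e + 1))
          (Finset.nonempty_range_iff.2 (Nat.succ_ne_zero e))
          (fun i => p ^ i • (μ₁ : WithTop Γ) + p • vf.v (a i))
        have hi₀ : i₀ ≤ e := Nat.lt_succ_iff.1 (Finset.mem_range.1 hi₀mem)
        have hfle : p ^ i₀ • (μ₁ : WithTop Γ) + p • vf.v (a i₀) ≤ vf.v c := by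
          rw [hvceq, ← hinf_eq]
          exact hinf
        have hai₀ : a i₀ ≠ 0 := by
          intro h0
          have htop : p • (⊤ : WithTop Γ) = ⊤ := by
            obtain ⟨k, hk⟩ : ∃ k, p = k + 1 := ⟨p - 1, by have := hp.pos; omega⟩
            rw [hk, succ_nsmul, add_top]
          rw [h0, vf.v0, htop, add_top, top_le_iff] at hfle
          exact vf.vnt hc hfle
        have hbound : ((p ^ i₀ • μ₁ : Γ) : WithTop Γ) + p • vf.v (a i₀) ≤ vf.v c := by
          rw [WithTop.coe_nsmul]
          exact hfle
        obtain ⟨η, hηeq, hηv⟩ := vf.exists_root_additive p hp e a ha0 μ₁ c hc i₀ hi₀ hai₀ hbound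
        refine ⟨b₁ + η, ?_, ?_⟩
        · rw [add_sub_cancel_left]
          exact hηv
        · rw [Ladd b₁ η, hηeq, hcdef]
          rw [show (∑ i ∈ range (e + 1), (a i) ^ p * b₁ ^ (p ^ i))
            + (b₂ ^ p - ∑ i ∈ range (e + 1), (a i) ^ p * b₁ ^ (p ^ i)) - b₂ ^ p = 0 by ring]
          rw [vf.v0]
          exact le_top
    obtain ⟨w, hw1, hw2⟩ := hstepA
    -- Step B : approximate `w` by a p-th power
    set N : Γ := max 0 (max μ₁ (p • μ₂)) with hN
    obtain ⟨z, hz⟩ := vf.exists_pow_approx p hp w N (le_max_left _ _)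
    refine ⟨z, ?_, ?_⟩
    · rw [show z ^ p - b₁ = (z ^ p - w) + (w - b₁) by ring]
      refine le_trans (le_min ?_ ?_) (vf.v_add _ _)
      · exact le_trans (WithTop.coe_le_coe.2 (le_trans (le_max_left _ _) (le_max_right _ _))) hz
      · exact hw1
    · -- second congruence
      have hLN : ((N : Γ) : WithTop Γ) ≤
          vf.v (∑ i ∈ range (e + 1), (a i) ^ p * (z ^ p - w) ^ (p ^ i)) := by
        refine vf.vsum fun i hi => ?_
        rw [vf.v_mul, vf.vpow, vf.vpow]
        calc ((N : Γ) : WithTop Γ) = 0 + (N : WithTop Γ) := (zero_add _).symm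
        _ ≤ p • vf.v (a i) + p ^ i • vf.v (z ^ p - w) := by
            refine add_le_add (nsmul_nonneg (ha i (Nat.lt_succ_iff.1 (Finset.mem_range.1 hi))) p) ?_
            calc ((N : Γ) : WithTop Γ) = 1 • (N : WithTop Γ) := (one_nsmul _).symm
            _ ≤ p ^ i • (N : WithTop Γ) := by
                refine nsmul_le_nsmul_left ?_ (Nat.one_le_pow i p hp.pos)
                exact_mod_cast (le_max_left 0 (max μ₁ (p • μ₂)))
            _ ≤ p ^ i • vf.v (z ^ p - w) := nsmul_le_nsmul_right hz _
      have hLsplit : (∑ i ∈ range (e + 1), (a i) ^ p * (z ^ p) ^ (p ^ i)) - b₂ ^ p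
          = (∑ i ∈ range (e + 1), (a i) ^ p * (z ^ p - w) ^ (p ^ i))
            + ((∑ i ∈ range (e + 1), (a i) ^ p * w ^ (p ^ i)) - b₂ ^ p) := by
        have h9 := Ladd (z ^ p - w) w
        rw [sub_add_cancel] at h9
        rw [h9]
        ring
      have hppow : ((p • μ₂ : Γ) : WithTop Γ) ≤
          p • vf.v ((∑ i ∈ range (e + 1), a i * z ^ (p ^ i)) - b₂) := by
        rw [← vf.vpow, sub_pow_char, frob z, hLsplit]
        refine le_trans (le_min ?_ ?_) (vf.v_add _ _)
        · exact le_trans (WithTop.coe_le_coe.2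
            (le_trans (le_max_right _ _) (le_max_right _ _))) hLN
        · exact hw2
      -- divide by p
      rcases eq_or_ne (vf.v ((∑ i ∈ range (e + 1), a i * z ^ (p ^ i)) - b₂)) ⊤ with htop | hfin
      · rw [htop]; exact le_top
      · obtain ⟨x, hx⟩ := WithTop.ne_top_iff_exists.1 hfin
        rw [← hx] at hppow ⊢
        rw [← WithTop.coe_nsmul, WithTop.coe_le_coe] at hppow
        exact WithTop.coe_le_coe.2 (le_of_nsmul_le_nsmul_right hp.ne_zero hppow)
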